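/- Let n be a positive integer and I ⊆ {0,...,2n-1} with |I| = n satisfying (2n-1) − I = {0,...,2n-1} \ I (where (2n-1) − I = {2n-1-i : i ∈ I}). If w : [0,1] → ℝ is 2n times continuously differentiable with w^{(2n)} = 0 on [0,1], w^{(i)}(0) = 0 for i ∈ {0,...,n-1}, and w^{(i)}(1) = 0 for i ∈ I, then w = 0 on [0,1]. -/

import Mathlib

open Set intervalIntegral

theorem stmt7 (n : ℕ) (hn : 0 < n) (I : Finset ℕ) (hI : I ⊆ Finset.range (2*n))
    (hcard : I.card = n)
    (hsym : Finset.image (fun i => 2*n - 1 - i) I = Finset.range (2*n) \ I)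
    (w : ℝ → ℝ) (hw : ContDiffOn ℝ (2*n) w (Set.Icc 0 1))
    (h2n : ∀ t ∈ Set.Icc (0:ℝ) 1, iteratedDerivWithin (2*n) w (Set.Icc 0 1) t = 0)
    (h0 : ∀ i < n, iteratedDerivWithin i w (Set.Icc 0 1) 0 = 0)
    (h1 : ∀ i ∈ I, iteratedDerivWithin i w (Set.Icc 0 1) 1 = 0) :
    ∀ t ∈ Set.Icc (0:ℝ) 1, w t = 0 := by
  set s : Set ℝ := Set.Icc 0 1 with hs_def
  have hs : UniqueDiffOn ℝ s := uniqueDiffOn_Icc zero_lt_one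
  set D : ℕ → ℝ → ℝ := fun k => iteratedDerivWithin k w s with hD
  have hcont : ∀ k ≤ 2*n, ContinuousOn (D k) s := fun k hk =>
    hw.continuousOn_iteratedDerivWithin (by exact_mod_cast hk) hs
  have hdiff : ∀ k < 2*n, DifferentiableOn ℝ (D k) s := fun k hk =>
    hw.differentiableOn_iteratedDerivWithin (by exact_mod_cast hk) hs
  -- derivative of D k within s
  have hder : ∀ k < 2*n, ∀ x ∈ s, HasDerivWithinAt (D k) (D (k+1) x) s x := by
    intro k hk x hx
    have h1 := (hdiff k hk x hx).hasDerivWithinAt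
    rwa [← iteratedDerivWithin_succ] at h1
  -- the bilinear concomitant
  set B : ℝ → ℝ := fun t => ∑ k ∈ Finset.range n, (-1)^k * (D (2*n-1-k) t * D k t) with hB
  have hBcont : ContinuousOn B s := by
    apply continuousOn_finset_sum
    intro k hk
    simp only [Finset.mem_range] at hk
    exact (continuousOn_const.mul ((hcont _ (by omega)).mul (hcont _ (by omega))))
  have hBder : ∀ x ∈ Set.Ioo (0:ℝ) 1, HasDerivAt B ((-1)^(n-1) * (D n x)^2) x := by
    intro x hx
    have hxs : x ∈ s := Set.mem_Icc_of_Ioo hx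
    have hnhds : s ∈ nhds x := Icc_mem_nhds hx.1 hx.2
    have hterm : ∀ k ∈ Finset.range n, HasDerivAt
        (fun t => (-1:ℝ)^k * (D (2*n-1-k) t * D k t))
        (((-1)^k * (D (2*n-k) x * D k x)) - ((-1)^(k+1) * (D (2*n-(k+1)) x * D (k+1) x))) x := by
      intro k hk
      simp only [Finset.mem_range] at hk
      have hd1 : HasDerivAt (D (2*n-1-k)) (D (2*n-k) x) x := by
        have := (hder (2*n-1-k) (by omega) x hxs).hasDerivAt hnhds
        have e : 2*n-1-k+1 = 2*n-k := by omega
        rwa [e] at this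
      have hd2 : HasDerivAt (D k) (D (k+1) x) x :=
        (hder k (by omega) x hxs).hasDerivAt hnhds
      have := (hd1.mul hd2).const_mul ((-1:ℝ)^k)
      refine this.congr_deriv ?_
      have e2 : 2*n-(k+1) = 2*n-1-k := by omega
      rw [e2, pow_succ]
      ring
    have hsum := HasDerivAt.fun_sum hterm
    have htel : ∑ k ∈ Finset.range n,
        (((-1:ℝ)^k * (D (2*n-k) x * D k x)) - ((-1)^(k+1) * (D (2*n-(k+1)) x * D (k+1) x)))
        = (-1)^(n-1) * (D n x)^2 := by
      rw [Finset.sum_range_sub' (fun k => ((-1:ℝ)^k * (D (2*n-k) x * D k x)))]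
      have e0 : 2*n-0 = 2*n := by omega
      have en : 2*n-n = n := by omega
      rw [e0, en]
      simp only [hD]
      rw [h2n x hxs]
      have : (-1:ℝ)^n = -(-1)^(n-1) := by
        conv_lhs => rw [show n = (n-1)+1 by omega]
        rw [pow_succ]; ring
      rw [this]
      ring
    rw [← htel]
    exact hsum
  -- boundary values
  have hB0 : B 0 = 0 := by
    apply Finset.sum_eq_zero
    intro k hk
    simp only [Finset.mem_range] at hk
    rw [show D k 0 = 0 from h0 k hk]
    ring
  have hB1 : B 1 = 0 := by
    apply Finset.sum_eq_zero
    intro k hk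
    simp only [Finset.mem_range] at hk
    by_cases hkI : k ∈ I
    · rw [show D k 1 = 0 from h1 k hkI]; ring
    · have hkmem : k ∈ Finset.range (2*n) \ I := by
        simp [Finset.mem_sdiff, Finset.mem_range]; exact ⟨by omega, hkI⟩
      rw [← hsym] at hkmem
      obtain ⟨i, hiI, hieq⟩ := Finset.mem_image.mp hkmem
      have hi2n : i < 2*n := Finset.mem_range.mp (hI hiI)
      have : 2*n-1-k = i := by omega
      rw [show D (2*n-1-k) 1 = 0 by rw [this]; exact h1 i hiI]
      ring
  -- FTC
  have hint : ∫ x in (0:ℝ)..1, (-1:ℝ)^(n-1) * (D n x)^2 = 0 := by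
    have hconti : ContinuousOn (fun x => (-1:ℝ)^(n-1) * (D n x)^2) s :=
      continuousOn_const.mul ((hcont n (by omega)).pow 2)
    rw [integral_eq_sub_of_hasDerivAt_of_le zero_le_one hBcont hBder
      (hconti.intervalIntegrable_of_Icc zero_le_one), hB0, hB1, sub_zero]
  have hDn : ∀ t ∈ s, D n t = 0 := by
    by_contra hcon
    push_neg at hcon
    obtain ⟨t, ht, htne⟩ := hcon
    have hsqcont : ContinuousOn (fun x => (D n x)^2) s := (hcont n (by omega)).pow 2
    have hpos : (∫ x in (0:ℝ)..1, (0:ℝ)) < ∫ x in (0:ℝ)..1, (D n x)^2 := by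
      apply integral_lt_integral_of_continuousOn_of_le_of_exists_lt zero_lt_one
        continuousOn_const hsqcont
      · intro x hx; positivity
      · exact ⟨t, ht, by positivity⟩
    rw [intervalIntegral.integral_const, smul_zero] at hpos
    have : ∫ x in (0:ℝ)..1, (-1:ℝ)^(n-1) * (D n x)^2
        = (-1:ℝ)^(n-1) * ∫ x in (0:ℝ)..1, (D n x)^2 := by
      rw [intervalIntegral.integral_const_mul]
    rw [this] at hint
    rcases mul_eq_zero.mp hint with h | h
    · exact absurd h (by positivity)
    · exact absurd h (ne_of_gt hpos)
  -- downward induction: all derivatives below n vanish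
  have hdown : ∀ j, j ≤ n → ∀ t ∈ s, D (n-j) t = 0 := by
    intro j
    induction j with
    | zero => intro _ t ht; simpa using hDn t ht
    | succ j ih =>
      intro hj t ht
      have hk : n - (j+1) < n := by omega
      have hk1 : n - (j+1) + 1 = n - j := by omega
      have hconst : D (n-(j+1)) t = D (n-(j+1)) 0 := by
        apply Convex.is_const_of_fderivWithin_eq_zero (convex_Icc 0 1)
          (hdiff _ (by omega))
        · intro x hx
          have hd := (hder (n-(j+1)) (by omega) x hx)
          rw [hk1] at hd
          rw [ih (by omega) x hx] at hd
          have := hd.hasFDerivWithinAt.fderivWithin (hs x hx)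
          rw [this]
          exact ContinuousLinearMap.ext_ring (by simp)

        · exact ht
        · exact Set.left_mem_Icc.mpr zero_le_one
      rw [hconst]
      exact h0 _ (by omega)
  intro t ht
  have := hdown n le_rfl t ht
  simpa [hD] using this
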